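/- Let A be a connected graph with at least two cycles and e ∈ E(A). Then e belongs to the kernel ⌊A⌋ of A if and only if every component of A \ e contains a cycle (equivalently, A \ e has no tree component). -/

import Mathlib

open scoped Classical

/-- A finite multigraph: loops and parallel edges allowed. -/
structure Multigraph where
  V : Type
  E : Type
  [fintypeV : Fintype V]
  [fintypeE : Fintype E]
  ends : E → Sym2 V

attribute [instance] Multigraph.fintypeV Multigraph.fintypeE

namespace Multigraph

variable (G : Multigraph)

/-- Vertex support of an edge set: vertices incident to some edge of `X`. -/
noncomputable def supp (X : Finset G.E) : Finset G.V :=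
  Finset.univ.filter (fun v => ∃ e ∈ X, v ∈ G.ends e)

/-- `Δ` of the subgraph induced by the edge set `X`. -/
noncomputable def delta (X : Finset G.E) : ℤ := (X.card : ℤ) - (G.supp X).card

/-- `Δ(G) = |E(G)| - |V(G)|`. -/
noncomputable def deltaG : ℤ := (Fintype.card G.E : ℤ) - (Fintype.card G.V : ℤ)

/-- Degree of `v` in the edge set `X`: loops count twice. -/
noncomputable def degIn (X : Finset G.E) (v : G.V) : ℕ :=
  ∑ e ∈ X, (if G.ends e = s(v, v) then 2 else if v ∈ G.ends e then 1 else 0)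

/-- `u` and `v` are joined by an edge of `X`. -/
def adjIn (X : Finset G.E) (u v : G.V) : Prop := ∃ e ∈ X, G.ends e = s(u, v)

/-- Reachability using only edges of `X`. -/
def reachIn (X : Finset G.E) : G.V → G.V → Prop :=
  Relation.ReflTransGen (G.adjIn X)

/-- The edge set `X` induces a connected subgraph. -/
def ConnSet (X : Finset G.E) : Prop :=
  X.Nonempty ∧ ∀ u ∈ G.supp X, ∀ v ∈ G.supp X, G.reachIn X u v

/-- Edges of the component of the subgraph `(V, X)` containing vertex `v`. -/
noncomputable def compEdges (X : Finset G.E) (v : G.V) : Finset G.E :=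
  X.filter (fun f => ∃ u ∈ G.ends f, G.reachIn X v u)

/-- Vertices of the component of `v` in the graph `(V, X)` (all vertices kept). -/
noncomputable def compVerts (X : Finset G.E) (v : G.V) : Finset G.V :=
  Finset.univ.filter (fun u => G.reachIn X v u)

/-- `C` is (the edge set of) a cycle: connected, every vertex of degree 2. -/
def IsCycleSet (C : Finset G.E) : Prop :=
  G.ConnSet C ∧ ∀ v ∈ G.supp C, G.degIn C v = 2

/-- `T` induces a tree. -/
def IsTreeSet (T : Finset G.E) : Prop := G.ConnSet T ∧ G.delta T = -1

/-- The component of `v` in `(V, X)` is a tree (possibly a single vertex). -/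
def IsTreeCompAt (X : Finset G.E) (v : G.V) : Prop :=
  (G.compEdges X v).card + 1 = (G.compVerts X v).card

/-- The number of tree components of the graph `(V, X)`. -/
noncomputable def treeCount (X : Finset G.E) : ℕ :=
  (((Finset.univ : Finset G.V).filter (fun v => G.IsTreeCompAt X v)).image
    (fun v => G.compVerts X v)).card

/-- The graph `G` has no isolated vertices. -/
def NoIso : Prop := ∀ v : G.V, ∃ e : G.E, v ∈ G.ends e

/-- The graph `G` has no leaves. -/
def NoLeaf : Prop := ∀ v : G.V, G.degIn Finset.univ v ≠ 1

/-- The graph `G` is connected. -/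
def GConn : Prop := Nonempty G.V ∧ ∀ u v : G.V, G.reachIn Finset.univ u v

/-- `G` is a bicycle: connected, leafless, with `Δ(G) = 1`. -/
def IsBicycle : Prop := G.GConn ∧ G.NoLeaf ∧ G.deltaG = 1

/-- One round of deleting all edges incident to a leaf. -/
noncomputable def pruneStep (X : Finset G.E) : Finset G.E :=
  X.filter (fun e => ∀ v ∈ G.ends e, G.degIn X v ≠ 1)

/-- Edge set obtained from `G` by repeatedly deleting leaves until none remain. -/
noncomputable def kernelSet : Finset G.E :=
  G.pruneStep^[Fintype.card G.E] Finset.univ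

/-- `Δ` of the component of `G` containing `v`. -/
noncomputable def compDelta (v : G.V) : ℤ :=
  ((G.compEdges Finset.univ v).card : ℤ) - ((G.compVerts Finset.univ v).card : ℤ)

/-- The core `[G]`: union of the kernels of the components `A` with `Δ(A) ≥ 1`. -/
noncomputable def coreSet : Finset G.E :=
  G.kernelSet.filter (fun e => ∀ v ∈ G.ends e, 1 ≤ G.compDelta v)

/-- `P` is the edge set of an `(x,y)`-path. -/
def IsPathSet (P : Finset G.E) (x y : G.V) : Prop :=
  G.ConnSet P ∧ x ≠ y ∧ x ∈ G.supp P ∧ y ∈ G.supp P ∧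
  G.degIn P x = 1 ∧ G.degIn P y = 1 ∧
  ∀ v ∈ G.supp P, v ≠ x → v ≠ y → G.degIn P v = 2

/-- `C` induces a bicycle subgraph: connected, leafless, `Δ = 1`. -/
def IsBicycleSet (C : Finset G.E) : Prop :=
  G.ConnSet C ∧ (∀ v ∈ G.supp C, G.degIn C v ≠ 1) ∧ G.delta C = 1

/-- Circuits of the `k`-circular matroid `M_k(G)`: minimal nonempty edge sets `C`
with `|C| = |V(G⟨C⟩)| + k`, i.e. `Δ(G⟨C⟩) = k`. -/
def IsCircuitSet (k : ℕ) (C : Finset G.E) : Prop :=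
  (C.Nonempty ∧ G.delta C = (k : ℤ)) ∧
  ∀ D ⊂ C, ¬ (D.Nonempty ∧ G.delta D = (k : ℤ))

/-- Independent sets of `M_k(G)`. -/
def Indep (k : ℕ) (I : Finset G.E) : Prop := ∀ C ⊆ I, ¬ G.IsCircuitSet k C

/-- Bases of `M_k(G)`: maximal independent sets. -/
def IsBase (k : ℕ) (B : Finset G.E) : Prop :=
  G.Indep k B ∧ ∀ B' : Finset G.E, G.Indep k B' → B ⊆ B' → B' = B

/-- The matroid `M_k(G)` is connected: at least two elements and every two
elements lie on a common circuit. -/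
def MConn (k : ℕ) : Prop :=
  2 ≤ Fintype.card G.E ∧
  ∀ a b : G.E, ∃ C : Finset G.E, G.IsCircuitSet k C ∧ a ∈ C ∧ b ∈ C

end Multigraph

open scoped symmDiff

namespace Multigraph

variable {G : Multigraph}

/-! ### Basic lemmas -/

lemma adjIn_symm {X : Finset G.E} {u v : G.V} (h : G.adjIn X u v) : G.adjIn X v u := by
  obtain ⟨e, he, hend⟩ := h
  exact ⟨e, he, by rw [hend, Sym2.eq_swap]⟩

lemma reach_refl (X : Finset G.E) (v : G.V) : G.reachIn X v v :=
  Relation.ReflTransGen.refl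

lemma reach_symm {X : Finset G.E} {u v : G.V} (h : G.reachIn X u v) : G.reachIn X v u :=
  haveI : Std.Symm (G.adjIn X) := ⟨fun _ _ hh => adjIn_symm hh⟩
  Std.Symm.symm (r := Relation.ReflTransGen (G.adjIn X)) _ _ h

lemma reach_trans {X : Finset G.E} {u v w : G.V} (h : G.reachIn X u v)
    (h' : G.reachIn X v w) : G.reachIn X u w :=
  Relation.ReflTransGen.trans h h'

lemma reach_mono {X Y : Finset G.E} (hXY : X ⊆ Y) {u v : G.V} (h : G.reachIn X u v) :
    G.reachIn Y u v :=
  Relation.ReflTransGen.mono (r := G.adjIn X) (p := G.adjIn Y)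
    (fun _ _ hh => by obtain ⟨e, he, hend⟩ := hh; exact ⟨e, hXY he, hend⟩) _ _ h

lemma reach_of_mem_ends {X : Finset G.E} {g : G.E} (hg : g ∈ X) {u t : G.V}
    (hu : u ∈ G.ends g) (ht : t ∈ G.ends g) : G.reachIn X u t := by
  by_cases h : u = t
  · subst h; exact reach_refl X u
  · have : G.ends g = s(u, t) := (Sym2.mem_and_mem_iff h).mp ⟨hu, ht⟩
    exact Relation.ReflTransGen.single ⟨g, hg, this⟩

lemma mem_supp_iff {X : Finset G.E} {v : G.V} :
    v ∈ G.supp X ↔ ∃ e ∈ X, v ∈ G.ends e := by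
  simp [Multigraph.supp]

lemma supp_mono {X Y : Finset G.E} (h : X ⊆ Y) : G.supp X ⊆ G.supp Y := by
  intro v hv
  rw [mem_supp_iff] at hv ⊢
  obtain ⟨e, he, hv⟩ := hv
  exact ⟨e, h he, hv⟩

lemma degIn_mono {X Y : Finset G.E} (h : X ⊆ Y) (v : G.V) :
    G.degIn X v ≤ G.degIn Y v :=
  Finset.sum_le_sum_of_subset h

lemma one_le_degIn {X : Finset G.E} {e : G.E} (he : e ∈ X) {v : G.V}
    (hv : v ∈ G.ends e) : 1 ≤ G.degIn X v := by
  refine le_trans ?_ (Finset.single_le_sum (f := fun e =>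
    (if G.ends e = s(v, v) then 2 else if v ∈ G.ends e then 1 else 0))
    (fun _ _ => Nat.zero_le _) he)
  by_cases h : G.ends e = s(v, v) <;> simp [h, hv]

lemma degIn_eq_zero {X : Finset G.E} {v : G.V} (h : v ∉ G.supp X) :
    G.degIn X v = 0 := by
  rw [Multigraph.degIn]
  refine Finset.sum_eq_zero fun e he => ?_
  have hv : v ∉ G.ends e := fun hv => h (mem_supp_iff.mpr ⟨e, he, hv⟩)
  have h2 : G.ends e ≠ s(v, v) := fun h2 => hv (by rw [h2]; simp)
  simp [h2, hv]

lemma mem_supp_of_one_le_degIn {X : Finset G.E} {v : G.V} (h : 1 ≤ G.degIn X v) :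
    v ∈ G.supp X := by
  by_contra hc
  rw [degIn_eq_zero hc] at h
  omega

lemma two_le_degIn_of_two_edges {X : Finset G.E} {e₁ e₂ : G.E} (h1 : e₁ ∈ X)
    (h2 : e₂ ∈ X) (hne : e₁ ≠ e₂) {v : G.V} (hv1 : v ∈ G.ends e₁)
    (hv2 : v ∈ G.ends e₂) : 2 ≤ G.degIn X v := by
  have hsub : {e₁, e₂} ⊆ X := by
    intro t ht; simp at ht; rcases ht with rfl | rfl <;> assumption
  refine le_trans ?_ (Finset.sum_le_sum_of_subset hsub)
  rw [Finset.sum_pair hne]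
  have a1 : 1 ≤ (if G.ends e₁ = s(v, v) then 2 else if v ∈ G.ends e₁ then 1 else 0) := by
    by_cases h : G.ends e₁ = s(v, v) <;> simp [h, hv1]
  have a2 : 1 ≤ (if G.ends e₂ = s(v, v) then 2 else if v ∈ G.ends e₂ then 1 else 0) := by
    by_cases h : G.ends e₂ = s(v, v) <;> simp [h, hv2]
  omega

lemma two_le_degIn_of_loop {X : Finset G.E} {e : G.E} (he : e ∈ X) {v : G.V}
    (hv : G.ends e = s(v, v)) : 2 ≤ G.degIn X v := by
  refine le_trans ?_ (Finset.single_le_sum (f := fun e =>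
    (if G.ends e = s(v, v) then 2 else if v ∈ G.ends e then 1 else 0))
    (fun _ _ => Nat.zero_le _) he)
  simp [hv]

/-- structure of a degree-one vertex -/
lemma leaf_struct {X : Finset G.E} {v : G.V} (h : G.degIn X v = 1) :
    ∃ g ∈ X, v ∈ G.ends g ∧ G.ends g ≠ s(v, v) ∧
      ∀ h ∈ X, v ∈ G.ends h → h = g := by
  have hs : v ∈ G.supp X := mem_supp_of_one_le_degIn (by omega)
  obtain ⟨g, hg, hvg⟩ := mem_supp_iff.mp hs
  refine ⟨g, hg, hvg, ?_, ?_⟩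
  · intro hl
    have := two_le_degIn_of_loop hg hl
    omega
  · intro h' hh' hvh'
    by_contra hne
    have := two_le_degIn_of_two_edges hh' hg hne hvh' hvg
    omega

lemma degIn_erase_add {X : Finset G.E} {e : G.E} (he : e ∈ X) (v : G.V) :
    G.degIn (X.erase e) v +
      (if G.ends e = s(v, v) then 2 else if v ∈ G.ends e then 1 else 0)
      = G.degIn X v :=
  Finset.sum_erase_add _ _ he

/-! ### Degree sum -/

lemma degIn_sum (X : Finset G.E) : ∑ v, G.degIn X v = 2 * X.card := by
  simp only [Multigraph.degIn]
  rw [Finset.sum_comm]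
  have key : ∀ e ∈ X, ∑ v : G.V,
      (if G.ends e = s(v, v) then 2 else if v ∈ G.ends e then 1 else 0) = 2 := by
    intro e _
    obtain ⟨⟨a, b⟩, hab⟩ := (G.ends e).exists_rep
    by_cases h : a = b
    · subst h
      rw [Finset.sum_congr rfl (g := fun v => if v = a then 2 else 0)]
      · simp
      · intro v _
        by_cases hv : v = a
        · subst hv; simp [← hab]
        · have h1 : G.ends e ≠ s(v, v) := by
            rw [← hab]; simp [Sym2.eq_iff]; intro hc; exact absurd hc.symm hv
          have h2 : v ∉ G.ends e := by
            rw [← hab]; simp [Sym2.mem_iff]; exact fun hc => hv hc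
          simp [h1, h2, hv]
    · rw [Finset.sum_congr rfl (g := fun v => if v = a then 1 else if v = b then 1 else 0)]
      · have hsplit : (∑ v : G.V, if v = a then 1 else if v = b then 1 else 0)
            = ∑ v : G.V, ((if v = a then 1 else 0) + (if v = b then 1 else 0)) := by
          refine Finset.sum_congr rfl fun v _ => ?_
          by_cases hva : v = a
          · subst hva; simp [h]
          · simp [hva]
        rw [hsplit, Finset.sum_add_distrib]
        simp [Finset.sum_ite_eq']
      · intro v _
        have hnl : G.ends e ≠ s(v, v) := by
          rw [← hab]; simp [Sym2.eq_iff]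
          rintro rfl; exact fun hc => h hc.symm
        by_cases hva : v = a
        · subst hva
          simp [hnl, ← hab]
          exact fun hc => h hc.symm
        · by_cases hvb : v = b
          · subst hvb
            simp [hnl, ← hab, hva]
            exact h
          · have h2 : v ∉ G.ends e := by
              rw [← hab]; simp [Sym2.mem_iff]
              exact ⟨fun hc => hva hc, fun hc => hvb hc⟩
            simp [hnl, h2, hva, hvb]
  rw [Finset.sum_congr rfl key, Finset.sum_const, smul_eq_mul, mul_comm]

lemma degIn_sum_supp (X : Finset G.E) : ∑ v ∈ G.supp X, G.degIn X v = 2 * X.card := by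
  rw [← degIn_sum X]
  exact Finset.sum_subset (Finset.subset_univ _) (fun v _ hv => degIn_eq_zero hv)

lemma card_supp_le_of_min_degree_two {X : Finset G.E}
    (h : ∀ u ∈ G.supp X, 2 ≤ G.degIn X u) : (G.supp X).card ≤ X.card := by
  have h1 := degIn_sum_supp X
  have h2 : 2 * (G.supp X).card ≤ ∑ v ∈ G.supp X, G.degIn X v := by
    calc 2 * (G.supp X).card = ∑ _v ∈ G.supp X, 2 := by simp [mul_comm]
    _ ≤ _ := Finset.sum_le_sum h
  omega

/-! ### Component lemmas -/

lemma mem_compEdges_iff {X : Finset G.E} {v : G.V} {g : G.E} :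
    g ∈ G.compEdges X v ↔ g ∈ X ∧ ∃ u ∈ G.ends g, G.reachIn X v u := by
  simp [Multigraph.compEdges]

lemma mem_compVerts_iff {X : Finset G.E} {v u : G.V} :
    u ∈ G.compVerts X v ↔ G.reachIn X v u := by
  simp [Multigraph.compVerts]

lemma compEdges_subset (X : Finset G.E) (v : G.V) : G.compEdges X v ⊆ X :=
  Finset.filter_subset _ _

lemma reach_of_mem_compEdges {X : Finset G.E} {v : G.V} {g : G.E}
    (hg : g ∈ G.compEdges X v) {u : G.V} (hu : u ∈ G.ends g) : G.reachIn X v u := by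
  rw [mem_compEdges_iff] at hg
  obtain ⟨hgX, t, ht, hreach⟩ := hg
  exact reach_trans hreach (reach_of_mem_ends hgX ht hu)

lemma mem_compEdges_of_reach {X : Finset G.E} {v : G.V} {g : G.E} (hg : g ∈ X)
    {u : G.V} (hu : u ∈ G.ends g) (h : G.reachIn X v u) : g ∈ G.compEdges X v :=
  mem_compEdges_iff.mpr ⟨hg, u, hu, h⟩

lemma supp_compEdges_subset (X : Finset G.E) (v : G.V) :
    G.supp (G.compEdges X v) ⊆ G.compVerts X v := by
  intro u hu
  obtain ⟨g, hg, hu⟩ := mem_supp_iff.mp hu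
  exact mem_compVerts_iff.mpr (reach_of_mem_compEdges hg hu)

lemma self_mem_compVerts (X : Finset G.E) (v : G.V) : v ∈ G.compVerts X v :=
  mem_compVerts_iff.mpr (reach_refl X v)

lemma compEdges_mono {X Y : Finset G.E} (h : X ⊆ Y) (v : G.V) :
    G.compEdges X v ⊆ G.compEdges Y v := by
  intro g hg
  rw [mem_compEdges_iff] at hg ⊢
  obtain ⟨hgX, u, hu, hr⟩ := hg
  exact ⟨h hgX, u, hu, reach_mono h hr⟩

/-- last-step lemma: a vertex reachable from `v` and different from `v` is in the
support of the component edges. -/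
lemma mem_supp_compEdges_of_reach {X : Finset G.E} {v u : G.V}
    (h : G.reachIn X v u) (hne : u ≠ v) : u ∈ G.supp (G.compEdges X v) := by
  rcases Relation.ReflTransGen.cases_tail h with rfl | ⟨c, hc, g, hg, hend⟩
  · exact absurd rfl hne
  · have hu : u ∈ G.ends g := by rw [hend]; simp
    have hcmem : c ∈ G.ends g := by rw [hend]; simp
    exact mem_supp_iff.mpr ⟨g, mem_compEdges_of_reach hg hcmem hc, hu⟩

/-- first-edge lemma -/
lemma exists_edge_at_of_reach {X : Finset G.E} {v u : G.V}
    (h : G.reachIn X v u) (hne : u ≠ v) : ∃ g ∈ X, v ∈ G.ends g := by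
  rcases Relation.ReflTransGen.cases_head h with rfl | ⟨c, ⟨g, hg, hend⟩, _⟩
  · exact absurd rfl hne
  · exact ⟨g, hg, by rw [hend]; simp⟩

/-! ### Deleting an edge: reachability lemmas -/

/-- "first use" : reaching `u` in `X` means reaching `u`, `a` or `b` in `X \ f`,
where `ends f = s(a,b)`; in fact the `a`/`b` disjuncts imply we reached an end of `f`. -/
lemma reach_erase_or_left {X : Finset G.E} {f : G.E} {a b : G.V}
    (hf : G.ends f = s(a, b)) {v u : G.V} (h : G.reachIn X v u) :
    G.reachIn (X.erase f) v u ∨ G.reachIn (X.erase f) v a ∨ G.reachIn (X.erase f) v b := by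
  induction h with
  | refl => exact Or.inl (reach_refl _ v)
  | tail hp hstep ih =>
    rename_i p q
    obtain ⟨g, hg, hend⟩ := hstep
    by_cases hgf : g = f
    · subst hgf
      rw [hf] at hend
      rcases Sym2.eq_iff.mp hend with ⟨rfl, rfl⟩ | ⟨rfl, rfl⟩
      · rcases ih with h' | h' | h'
        · exact Or.inr (Or.inl h')
        · exact Or.inr (Or.inl h')
        · exact Or.inr (Or.inr h')
      · rcases ih with h' | h' | h'
        · exact Or.inr (Or.inr h')
        · exact Or.inr (Or.inl h')
        · exact Or.inr (Or.inr h')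
    · have hstep' : G.adjIn (X.erase f) p q := ⟨g, Finset.mem_erase.mpr ⟨hgf, hg⟩, hend⟩
      rcases ih with h' | h' | h'
      · exact Or.inl (h'.tail hstep')
      · exact Or.inr (Or.inl h')
      · exact Or.inr (Or.inr h')

/-- "split": reaching `u` from `v` in `X` means reaching it from `v`, `a` or `b` in `X \ f`. -/
lemma reach_erase_or_right {X : Finset G.E} {f : G.E} {a b : G.V}
    (hf : G.ends f = s(a, b)) {v u : G.V} (h : G.reachIn X v u) :
    G.reachIn (X.erase f) v u ∨ G.reachIn (X.erase f) a u ∨ G.reachIn (X.erase f) b u := by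
  induction h with
  | refl => exact Or.inl (reach_refl _ v)
  | tail hp hstep ih =>
    rename_i p q
    obtain ⟨g, hg, hend⟩ := hstep
    by_cases hgf : g = f
    · subst hgf
      rw [hf] at hend
      rcases Sym2.eq_iff.mp hend with ⟨rfl, rfl⟩ | ⟨rfl, rfl⟩
      · exact Or.inr (Or.inr (reach_refl _ _))
      · exact Or.inr (Or.inl (reach_refl _ _))
    · have hstep' : G.adjIn (X.erase f) p q := ⟨g, Finset.mem_erase.mpr ⟨hgf, hg⟩, hend⟩
      rcases ih with h' | h' | h'
      · exact Or.inl (h'.tail hstep')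
      · exact Or.inr (Or.inl (h'.tail hstep'))
      · exact Or.inr (Or.inr (h'.tail hstep'))

/-- "bypass": if the ends of `f` are still connected after deleting `f`,
reachability is unchanged. -/
lemma reach_erase_of_reach {X : Finset G.E} {f : G.E} {a b : G.V}
    (hf : G.ends f = s(a, b)) (hab : G.reachIn (X.erase f) a b)
    {v u : G.V} (h : G.reachIn X v u) : G.reachIn (X.erase f) v u := by
  induction h with
  | refl => exact reach_refl _ v
  | tail hp hstep ih =>
    rename_i p q
    obtain ⟨g, hg, hend⟩ := hstep
    by_cases hgf : g = f
    · subst hgf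
      rw [hf] at hend
      rcases Sym2.eq_iff.mp hend with ⟨rfl, rfl⟩ | ⟨rfl, rfl⟩
      · exact reach_trans ih hab
      · exact reach_trans ih (reach_symm hab)
    · exact ih.tail ⟨g, Finset.mem_erase.mpr ⟨hgf, hg⟩, hend⟩

/-! ### Component counting -/

lemma comp_split {X : Finset G.E} {f : G.E} (hfX : f ∈ X) {a b : G.V}
    (hab : G.ends f = s(a, b)) {v : G.V} (hva : G.reachIn (X.erase f) v a)
    (hnab : ¬ G.reachIn (X.erase f) a b) :
    G.compVerts X v ⊆ G.compVerts (X.erase f) v ∪ G.compVerts (X.erase f) b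
    ∧ G.compEdges (X.erase f) v ∪ G.compEdges (X.erase f) b ⊆ (G.compEdges X v).erase f
    ∧ Disjoint (G.compVerts (X.erase f) v) (G.compVerts (X.erase f) b)
    ∧ Disjoint (G.compEdges (X.erase f) v) (G.compEdges (X.erase f) b) := by
  have hvaX : G.reachIn X v a := reach_mono (Finset.erase_subset f X) hva
  have haf : a ∈ G.ends f := by rw [hab]; simp
  have hbf : b ∈ G.ends f := by rw [hab]; simp
  have hvbX : G.reachIn X v b := reach_trans hvaX (reach_of_mem_ends hfX haf hbf)
  refine ⟨?_, ?_, ?_, ?_⟩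
  · intro u hu
    rw [mem_compVerts_iff] at hu
    rcases reach_erase_or_right hab hu with h' | h' | h'
    · exact Finset.mem_union_left _ (mem_compVerts_iff.mpr h')
    · exact Finset.mem_union_left _ (mem_compVerts_iff.mpr (reach_trans hva h'))
    · exact Finset.mem_union_right _ (mem_compVerts_iff.mpr h')
  · intro g hg
    rcases Finset.mem_union.mp hg with hg' | hg' <;>
      rw [mem_compEdges_iff] at hg' <;> obtain ⟨hgX, u, hu, hr⟩ := hg'
    · refine Finset.mem_erase.mpr ⟨(Finset.mem_erase.mp hgX).1, ?_⟩
      exact mem_compEdges_of_reach (Finset.mem_of_mem_erase hgX) hu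
        (reach_mono (Finset.erase_subset f X) hr)
    · refine Finset.mem_erase.mpr ⟨(Finset.mem_erase.mp hgX).1, ?_⟩
      exact mem_compEdges_of_reach (Finset.mem_of_mem_erase hgX) hu
        (reach_trans hvbX (reach_mono (Finset.erase_subset f X) hr))
  · rw [Finset.disjoint_left]
    intro u hu hu'
    rw [mem_compVerts_iff] at hu hu'
    exact hnab (reach_trans (reach_symm hva) (reach_trans hu (reach_symm hu')))
  · rw [Finset.disjoint_left]
    intro g hg hg'
    rw [mem_compEdges_iff] at hg hg'
    obtain ⟨hgX, u, hu, hr⟩ := hg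
    obtain ⟨_, u', hu', hr'⟩ := hg'
    have huu' : G.reachIn (X.erase f) u u' := reach_of_mem_ends hgX hu hu'
    exact hnab (reach_trans (reach_symm hva)
      (reach_trans hr (reach_trans huu' (reach_symm hr'))))

lemma card_le_aux {X : Finset G.E} {f : G.E} {a b v : G.V}
    (hfc : f ∈ G.compEdges X v) (hab : G.ends f = s(a, b))
    (hva : G.reachIn (X.erase f) v a)
    (ih : ∀ w, (G.compVerts (X.erase f) w).card ≤ (G.compEdges (X.erase f) w).card + 1) :
    (G.compVerts X v).card ≤ (G.compEdges X v).card + 1 := by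
  have hfX : f ∈ X := compEdges_subset X v hfc
  by_cases hre : G.reachIn (X.erase f) a b
  · have hcV : G.compVerts X v = G.compVerts (X.erase f) v := by
      ext u
      rw [mem_compVerts_iff, mem_compVerts_iff]
      exact ⟨fun h => reach_erase_of_reach hab hre h,
        fun h => reach_mono (Finset.erase_subset f X) h⟩
    rw [hcV]
    calc (G.compVerts (X.erase f) v).card ≤ (G.compEdges (X.erase f) v).card + 1 := ih v
    _ ≤ (G.compEdges X v).card + 1 :=
        Nat.add_le_add_right (Finset.card_le_card (compEdges_mono (Finset.erase_subset f X) v)) 1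
  · obtain ⟨h1, h2, h3, h4⟩ := comp_split hfX hab hva hre
    have c1 : (G.compVerts X v).card ≤
        (G.compVerts (X.erase f) v).card + (G.compVerts (X.erase f) b).card := by
      refine le_trans (Finset.card_le_card h1) ?_
      exact le_of_eq (Finset.card_union_of_disjoint h3)
    have c2 : (G.compEdges (X.erase f) v).card + (G.compEdges (X.erase f) b).card ≤
        ((G.compEdges X v).erase f).card := by
      rw [← Finset.card_union_of_disjoint h4]
      exact Finset.card_le_card h2
    have c3 : ((G.compEdges X v).erase f).card = (G.compEdges X v).card - 1 :=
      Finset.card_erase_of_mem hfc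
    have c4 : 1 ≤ (G.compEdges X v).card := Finset.card_pos.mpr ⟨f, hfc⟩
    have i1 := ih v
    have i2 := ih b
    omega

lemma card_compVerts_le (X : Finset G.E) :
    ∀ v, (G.compVerts X v).card ≤ (G.compEdges X v).card + 1 := by
  induction X using Finset.strongInduction with
  | _ X ihX =>
    intro v
    by_cases hE : G.compEdges X v = ∅
    · have hcV : G.compVerts X v = {v} := by
        ext u
        simp only [Finset.mem_singleton, mem_compVerts_iff]
        constructor
        · intro h
          by_contra hne
          have := mem_supp_compEdges_of_reach h hne
          rw [hE] at this
          rw [mem_supp_iff] at this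
          simp at this
        · rintro rfl; exact reach_refl _ _
      rw [hcV]; simp
    · obtain ⟨f, hfc⟩ := Finset.nonempty_iff_ne_empty.mpr hE
      have hfX : f ∈ X := compEdges_subset X v hfc
      obtain ⟨⟨a, b⟩, hab⟩ := (G.ends f).exists_rep
      have hab' : G.ends f = s(a, b) := hab.symm
      obtain ⟨_, t, ht, hreach⟩ := mem_compEdges_iff.mp hfc
      have hta : G.reachIn X v a := by
        have haf : a ∈ G.ends f := by rw [hab']; simp
        exact reach_trans hreach (reach_of_mem_ends hfX ht haf)
      have ih' : ∀ w, (G.compVerts (X.erase f) w).card ≤ (G.compEdges (X.erase f) w).card + 1 :=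
        ihX (X.erase f) (Finset.erase_ssubset hfX)
      rcases reach_erase_or_left hab' hta with h' | h' | h'
      · exact card_le_aux hfc hab' h' ih'
      · exact card_le_aux hfc hab' h' ih'
      · exact card_le_aux hfc (by rw [hab']; exact Sym2.eq_swap) h' ih'

/-- restricting an edge set to edges containing all edges at each of the
relevant vertices doesn't change degrees -/
lemma degIn_eq_of_closed {C₀ C : Finset G.E} (hsub : C₀ ⊆ C) {u : G.V}
    (hcl : ∀ g ∈ C, u ∈ G.ends g → g ∈ C₀) : G.degIn C₀ u = G.degIn C u := by
  refine Finset.sum_subset hsub fun g hg hg' => ?_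
  have hu : u ∉ G.ends g := fun hu => hg' (hcl g hg hu)
  have h2 : G.ends g ≠ s(u, u) := fun h2 => hu (by rw [h2]; simp)
  simp [h2, hu]

lemma card_le_aux2 {X C : Finset G.E} {f : G.E} {a b v w : G.V}
    (hfc : f ∈ G.compEdges X v) (hfC : f ∉ C)
    (hab : G.ends f = s(a, b)) (hva : G.reachIn (X.erase f) v a)
    (hCX : C ⊆ X) (hCne : C.Nonempty) (hCdeg : ∀ u ∈ G.supp C, 2 ≤ G.degIn C u)
    (hw : w ∈ G.supp C) (hvw : G.reachIn X v w)
    (ihL2 : ∀ u, (G.compVerts (X.erase f) u).card ≤ (G.compEdges (X.erase f) u).card + 1)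
    (ihS : ∀ u (C' : Finset G.E), C' ⊆ X.erase f → C'.Nonempty →
      (∀ z ∈ G.supp C', 2 ≤ G.degIn C' z) →
      (∃ w' ∈ G.supp C', G.reachIn (X.erase f) u w') →
      (G.compVerts (X.erase f) u).card ≤ (G.compEdges (X.erase f) u).card) :
    (G.compVerts X v).card ≤ (G.compEdges X v).card := by
  have hfX : f ∈ X := compEdges_subset X v hfc
  have hCX' : C ⊆ X.erase f := fun g hg =>
    Finset.mem_erase.mpr ⟨fun h => hfC (h ▸ hg), hCX hg⟩
  by_cases hre : G.reachIn (X.erase f) a b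
  · have hcV : G.compVerts X v = G.compVerts (X.erase f) v := by
      ext u
      rw [mem_compVerts_iff, mem_compVerts_iff]
      exact ⟨fun h => reach_erase_of_reach hab hre h,
        fun h => reach_mono (Finset.erase_subset f X) h⟩
    rw [hcV]
    calc (G.compVerts (X.erase f) v).card ≤ (G.compEdges (X.erase f) v).card :=
      ihS v C hCX' hCne hCdeg ⟨w, hw, reach_erase_of_reach hab hre hvw⟩
    _ ≤ (G.compEdges X v).card :=
        Finset.card_le_card (compEdges_mono (Finset.erase_subset f X) v)
  · obtain ⟨h1, h2, h3, h4⟩ := comp_split hfX hab hva hre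
    have c1 : (G.compVerts X v).card ≤
        (G.compVerts (X.erase f) v).card + (G.compVerts (X.erase f) b).card := by
      refine le_trans (Finset.card_le_card h1) ?_
      exact le_of_eq (Finset.card_union_of_disjoint h3)
    have c2 : (G.compEdges (X.erase f) v).card + (G.compEdges (X.erase f) b).card ≤
        ((G.compEdges X v).erase f).card := by
      rw [← Finset.card_union_of_disjoint h4]
      exact Finset.card_le_card h2
    have c3 : ((G.compEdges X v).erase f).card = (G.compEdges X v).card - 1 :=
      Finset.card_erase_of_mem hfc
    have c4 : 1 ≤ (G.compEdges X v).card := Finset.card_pos.mpr ⟨f, hfc⟩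
    have hw' : G.reachIn (X.erase f) v w ∨ G.reachIn (X.erase f) b w := by
      rcases reach_erase_or_right hab hvw with h' | h' | h'
      · exact Or.inl h'
      · exact Or.inl (reach_trans hva h')
      · exact Or.inr h'
    rcases hw' with hw' | hw'
    · have sv := ihS v C hCX' hCne hCdeg ⟨w, hw, hw'⟩
      have sb := ihL2 b
      omega
    · have sb := ihS b C hCX' hCne hCdeg ⟨w, hw, hw'⟩
      have sv := ihL2 v
      omega

/-- A component containing a subgraph of minimum degree 2 has at least as many
edges as vertices. -/
lemma card_compVerts_le_of_cycle (X : Finset G.E) :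
    ∀ (v : G.V) (C : Finset G.E), C ⊆ X → C.Nonempty →
    (∀ u ∈ G.supp C, 2 ≤ G.degIn C u) → (∃ w ∈ G.supp C, G.reachIn X v w) →
    (G.compVerts X v).card ≤ (G.compEdges X v).card := by
  induction X using Finset.strongInduction with
  | _ X ihX =>
    rintro v C hCX hCne hCdeg ⟨w, hw, hvw⟩
    -- replace C by its part inside the component of v
    set C₀ := C ∩ G.compEdges X v with hC₀def
    have hC₀C : C₀ ⊆ C := Finset.inter_subset_left
    have hC₀cE : C₀ ⊆ G.compEdges X v := Finset.inter_subset_right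
    have hmemC₀ : ∀ g ∈ C, ∀ u ∈ G.ends g, G.reachIn X v u → g ∈ C₀ := fun g hg u hu hr =>
      Finset.mem_inter.mpr ⟨hg, mem_compEdges_of_reach (hCX hg) hu hr⟩
    obtain ⟨gw, hgw, hwgw⟩ := mem_supp_iff.mp hw
    have hgwC₀ : gw ∈ C₀ := hmemC₀ gw hgw w hwgw hvw
    have hwC₀ : w ∈ G.supp C₀ := mem_supp_iff.mpr ⟨gw, hgwC₀, hwgw⟩
    have hC₀ne : C₀.Nonempty := ⟨gw, hgwC₀⟩
    have hC₀deg : ∀ u ∈ G.supp C₀, 2 ≤ G.degIn C₀ u := by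
      intro u hu
      obtain ⟨g, hg, hug⟩ := mem_supp_iff.mp hu
      have hru : G.reachIn X v u := reach_of_mem_compEdges (hC₀cE hg) hug
      have hcl : ∀ h ∈ C, u ∈ G.ends h → h ∈ C₀ := fun h hh huh => hmemC₀ h hh u huh hru
      rw [degIn_eq_of_closed hC₀C hcl]
      exact hCdeg u (supp_mono hC₀C hu)
    have hC₀X : C₀ ⊆ X := hC₀C.trans hCX
    by_cases hex : ∃ f ∈ G.compEdges X v, f ∉ C₀
    · obtain ⟨f, hfc, hfC⟩ := hex
      have hfX : f ∈ X := compEdges_subset X v hfc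
      obtain ⟨⟨a, b⟩, hab⟩ := (G.ends f).exists_rep
      have hab' : G.ends f = s(a, b) := hab.symm
      obtain ⟨_, t, ht, hreach⟩ := mem_compEdges_iff.mp hfc
      have hta : G.reachIn X v a := by
        have haf : a ∈ G.ends f := by rw [hab']; simp
        exact reach_trans hreach (reach_of_mem_ends hfX ht haf)
      have ihL2 : ∀ u, (G.compVerts (X.erase f) u).card ≤
          (G.compEdges (X.erase f) u).card + 1 := fun u => card_compVerts_le _ u
      have ihS := ihX (X.erase f) (Finset.erase_ssubset hfX)
      have ihS' : ∀ u (C' : Finset G.E), C' ⊆ X.erase f → C'.Nonempty →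
          (∀ z ∈ G.supp C', 2 ≤ G.degIn C' z) →
          (∃ w' ∈ G.supp C', G.reachIn (X.erase f) u w') →
          (G.compVerts (X.erase f) u).card ≤ (G.compEdges (X.erase f) u).card :=
        fun u C' h1 h2 h3 h4 => ihS u C' h1 h2 h3 h4
      rcases reach_erase_or_left hab' hta with h' | h' | h'
      · exact card_le_aux2 hfc hfC hab' h' hC₀X hC₀ne hC₀deg hwC₀ hvw ihL2 ihS'
      · exact card_le_aux2 hfc hfC hab' h' hC₀X hC₀ne hC₀deg hwC₀ hvw ihL2 ihS'
      · exact card_le_aux2 hfc hfC (by rw [hab']; exact Sym2.eq_swap) h'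
          hC₀X hC₀ne hC₀deg hwC₀ hvw ihL2 ihS'
    · push_neg at hex
      have hCeq : G.compEdges X v = C₀ := subset_antisymm hex hC₀cE
      -- v is in the support of C₀
      have hvsupp : v ∈ G.supp C₀ := by
        by_cases hwv : w = v
        · exact hwv ▸ hwC₀
        · obtain ⟨g, hg, hvg⟩ := exists_edge_at_of_reach hvw hwv
          have : g ∈ C₀ := hCeq ▸ mem_compEdges_of_reach hg hvg (reach_refl X v)
          exact mem_supp_iff.mpr ⟨g, this, hvg⟩
      have hsub : G.compVerts X v ⊆ G.supp C₀ := by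
        intro u hu
        rw [mem_compVerts_iff] at hu
        by_cases hne : u = v
        · exact hne ▸ hvsupp
        · exact hCeq ▸ mem_supp_compEdges_of_reach hu hne
      calc (G.compVerts X v).card ≤ (G.supp C₀).card := Finset.card_le_card hsub
      _ ≤ C₀.card := card_supp_le_of_min_degree_two hC₀deg
      _ = (G.compEdges X v).card := by rw [hCeq]

/-! ### Pruning -/

lemma mem_pruneStep_iff {X : Finset G.E} {g : G.E} :
    g ∈ G.pruneStep X ↔ g ∈ X ∧ ∀ v ∈ G.ends g, G.degIn X v ≠ 1 := by
  simp [Multigraph.pruneStep]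

lemma pruneStep_subset (X : Finset G.E) : G.pruneStep X ⊆ X :=
  Finset.filter_subset _ _

lemma leafless_subset_pruneStep {C X : Finset G.E} (hCX : C ⊆ X)
    (hC : ∀ u ∈ G.supp C, 2 ≤ G.degIn C u) : C ⊆ G.pruneStep X := by
  intro g hg
  refine mem_pruneStep_iff.mpr ⟨hCX hg, fun v hv => ?_⟩
  have h1 : 2 ≤ G.degIn C v := hC v (mem_supp_iff.mpr ⟨g, hg, hv⟩)
  have h2 := degIn_mono hCX v
  omega

lemma pruneStep_iterate_fix {S : Finset G.E} (h : G.pruneStep S = S) :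
    ∀ n, G.pruneStep^[n] S = S := by
  intro n
  induction n with
  | zero => rfl
  | succ n ih => rw [Function.iterate_succ_apply', ih, h]

lemma pruneStep_iterate_fixed : ∀ (n : ℕ) (S : Finset G.E), S.card ≤ n →
    G.pruneStep (G.pruneStep^[n] S) = G.pruneStep^[n] S := by
  intro n
  induction n with
  | zero =>
    intro S hS
    have : S = ∅ := Finset.card_eq_zero.mp (Nat.le_zero.mp hS)
    subst this
    rfl
  | succ n ih =>
    intro S hS
    by_cases hfix : G.pruneStep S = S
    · rw [pruneStep_iterate_fix hfix]
      exact hfix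
    · have hss : G.pruneStep S ⊂ S := (Finset.ssubset_iff_subset_ne).mpr
        ⟨pruneStep_subset S, hfix⟩
      have hcard : (G.pruneStep S).card ≤ n := by
        have := Finset.card_lt_card hss
        omega
      rw [Function.iterate_succ_apply]
      exact ih _ hcard

lemma kernelSet_fixed : G.pruneStep G.kernelSet = G.kernelSet := by
  rw [Multigraph.kernelSet]
  exact pruneStep_iterate_fixed _ _ (le_of_eq (Finset.card_univ))

lemma kernelSet_min_degree : ∀ u ∈ G.supp G.kernelSet, 2 ≤ G.degIn G.kernelSet u := by
  intro u hu
  obtain ⟨g, hg, hug⟩ := mem_supp_iff.mp hu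
  have hg' : g ∈ G.pruneStep G.kernelSet := by rw [kernelSet_fixed]; exact hg
  have h1 := (mem_pruneStep_iff.mp hg').2 u hug
  have h2 := one_le_degIn hg hug
  omega

/-- pruning preserves the invariant `|supp| ≤ |edges|` and nonemptiness -/
lemma pruneStep_invariant {X : Finset G.E} (hinv : (G.supp X).card ≤ X.card) :
    (G.supp (G.pruneStep X)).card ≤ (G.pruneStep X).card ∧
    (X.Nonempty → (G.pruneStep X).Nonempty) := by
  classical
  set L := (G.supp X).filter (fun u => G.degIn X u = 1) with hLdef
  have hLsupp : L ⊆ G.supp X := Finset.filter_subset _ _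
  -- support of the pruned graph avoids L
  have hsupp : G.supp (G.pruneStep X) ⊆ G.supp X \ L := by
    intro u hu
    obtain ⟨g, hg, hug⟩ := mem_supp_iff.mp hu
    obtain ⟨hgX, hdeg⟩ := mem_pruneStep_iff.mp hg
    refine Finset.mem_sdiff.mpr ⟨mem_supp_iff.mpr ⟨g, hgX, hug⟩, fun hL => ?_⟩
    exact hdeg u hug (Finset.mem_filter.mp hL).2
  -- removed edges inject into L
  have hrem : (X \ G.pruneStep X).card ≤ L.card := by
    have hchoice : ∀ g : G.E, ∃ u, u ∈ G.ends g := by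
      intro g
      obtain ⟨⟨c, d⟩, hcd⟩ := (G.ends g).exists_rep
      exact ⟨c, by rw [← hcd]; simp⟩
    set φ : G.E → G.V := fun g =>
      if h : ∃ u, u ∈ G.ends g ∧ G.degIn X u = 1 then h.choose else (hchoice g).choose
      with hφdef
    have hφspec : ∀ g ∈ X \ G.pruneStep X, φ g ∈ G.ends g ∧ G.degIn X (φ g) = 1 := by
      intro g hg
      obtain ⟨hgX, hgnot⟩ := Finset.mem_sdiff.mp hg
      have hex : ∃ u, u ∈ G.ends g ∧ G.degIn X u = 1 := by
        by_contra hc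
        push_neg at hc
        exact hgnot (mem_pruneStep_iff.mpr ⟨hgX, hc⟩)
      rw [hφdef]
      simp only [hex, dif_pos]
      exact hex.choose_spec
    refine Finset.card_le_card_of_injOn φ ?_ ?_
    · intro g hg
      obtain ⟨h1, h2⟩ := hφspec g hg
      have hgX := (Finset.mem_sdiff.mp hg).1
      exact Finset.mem_filter.mpr ⟨mem_supp_iff.mpr ⟨g, hgX, h1⟩, h2⟩
    · intro g₁ hg₁ g₂ hg₂ heq
      obtain ⟨h11, h12⟩ := hφspec g₁ hg₁
      obtain ⟨h21, h22⟩ := hφspec g₂ hg₂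
      obtain ⟨g, _, _, _, huniq⟩ := leaf_struct h12
      have e1 := huniq g₁ (Finset.mem_sdiff.mp hg₁).1 h11
      have e2 := huniq g₂ (Finset.mem_sdiff.mp hg₂).1 (heq ▸ h21)
      rw [e1, e2]
  have hLlt : X.Nonempty → L.card < (G.supp X).card := by
    intro hXne
    by_contra hc
    push_neg at hc
    have hLeq : L = G.supp X := Finset.eq_of_subset_of_card_le hLsupp hc
    have hall : ∀ u ∈ G.supp X, G.degIn X u = 1 := by
      intro u hu
      rw [← hLeq] at hu
      exact (Finset.mem_filter.mp hu).2
    have hsum : ∑ u ∈ G.supp X, G.degIn X u = (G.supp X).card := by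
      rw [Finset.sum_congr rfl hall]
      simp
    have h2X := degIn_sum_supp X
    obtain ⟨g, hg⟩ := hXne
    have hXpos : 0 < X.card := Finset.card_pos.mpr ⟨g, hg⟩
    omega
  have hcard1 : (G.supp (G.pruneStep X)).card ≤ (G.supp X).card - L.card := by
    refine le_trans (Finset.card_le_card hsupp) ?_
    rw [Finset.card_sdiff_of_subset hLsupp]
  have hcard2 : X.card - L.card ≤ (G.pruneStep X).card := by
    have := Finset.card_sdiff_add_card_eq_card (pruneStep_subset X)
    omega
  constructor
  · have hLle : L.card ≤ (G.supp X).card := Finset.card_le_card hLsupp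
    omega
  · intro hXne
    have := hLlt hXne
    refine Finset.card_pos.mp ?_
    omega

lemma exists_leafless {D : Finset G.E} (hcard : (G.supp D).card ≤ D.card)
    (hne : D.Nonempty) :
    ∃ C ⊆ D, C.Nonempty ∧ ∀ u ∈ G.supp C, 2 ≤ G.degIn C u := by
  have key : ∀ n, G.pruneStep^[n] D ⊆ D ∧
      (G.supp (G.pruneStep^[n] D)).card ≤ (G.pruneStep^[n] D).card ∧
      (G.pruneStep^[n] D).Nonempty := by
    intro n
    induction n with
    | zero => exact ⟨subset_rfl, hcard, hne⟩
    | succ n ih =>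
      obtain ⟨ih1, ih2, ih3⟩ := ih
      rw [Function.iterate_succ_apply']
      obtain ⟨a1, a2⟩ := pruneStep_invariant ih2
      exact ⟨(pruneStep_subset _).trans ih1, a1, a2 ih3⟩
  obtain ⟨k1, _, k3⟩ := key D.card
  refine ⟨G.pruneStep^[D.card] D, k1, k3, ?_⟩
  have hfix := pruneStep_iterate_fixed D.card D (le_refl _)
  intro u hu
  obtain ⟨g, hg, hug⟩ := mem_supp_iff.mp hu
  have hg' : g ∈ G.pruneStep (G.pruneStep^[D.card] D) := by rw [hfix]; exact hg
  have h1 := (mem_pruneStep_iff.mp hg').2 u hug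
  have h2 := one_le_degIn hg hug
  omega

/-! ### Reachability survives pruning -/

lemma shortcut_aux {W : Finset G.E} {e : G.E} {p : G.V} (hp : G.degIn W p ≠ 1)
    {q : G.V} (h : G.reachIn (W.erase e) p q) :
    G.reachIn ((G.pruneStep W).erase e) p q ∨
      (G.degIn W q = 1 ∧ ∃ q', G.adjIn (W.erase e) q q' ∧
        G.reachIn ((G.pruneStep W).erase e) p q') := by
  induction h with
  | refl => exact Or.inl (reach_refl _ _)
  | tail hpr hstep ih =>
    rename_i r q
    obtain ⟨g, hg, hend⟩ := hstep
    have hgW : g ∈ W := Finset.mem_of_mem_erase hg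
    have hge : g ≠ e := (Finset.mem_erase.mp hg).1
    rcases ih with hreach | ⟨hr1, r', hadj, hreach'⟩
    · have hrdeg : G.degIn W r ≠ 1 := by
        intro hr1
        rcases Relation.ReflTransGen.cases_tail hreach with heq | ⟨c, _, hadjcr⟩
        · rw [heq] at hr1
          exact hp hr1
        · obtain ⟨h', hh', hend'⟩ := hadjcr
          have hh'p : h' ∈ G.pruneStep W := Finset.mem_of_mem_erase hh'
          have hrh' : r ∈ G.ends h' := by rw [hend']; simp
          exact (mem_pruneStep_iff.mp hh'p).2 r hrh' hr1
      by_cases hqdeg : G.degIn W q = 1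
      · exact Or.inr ⟨hqdeg, r, ⟨g, hg, by rw [hend, Sym2.eq_swap]⟩, hreach⟩
      · have hgp : g ∈ (G.pruneStep W).erase e := by
          refine Finset.mem_erase.mpr ⟨hge, mem_pruneStep_iff.mpr ⟨hgW, ?_⟩⟩
          intro v hv
          rw [hend] at hv
          rcases Sym2.mem_iff.mp hv with rfl | rfl
          exacts [hrdeg, hqdeg]
        exact Or.inl (hreach.tail ⟨g, hgp, hend⟩)
    · obtain ⟨g₀, hg₀W, hrg₀, hnl, huniq⟩ := leaf_struct hr1
      have hgg₀ : g = g₀ := huniq g hgW (by rw [hend]; simp)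
      obtain ⟨h', hh', hend'⟩ := hadj
      have hh'g₀ : h' = g₀ := huniq h' (Finset.mem_of_mem_erase hh') (by rw [hend']; simp)
      have hkey : s(r, q) = s(r, r') := by
        rw [← hend, hgg₀, ← hh'g₀, hend']
      rcases Sym2.eq_iff.mp hkey with ⟨_, rfl⟩ | ⟨hrr', rfl⟩
      · exact Or.inl hreach'
      · exact Or.inr ⟨hr1, r', ⟨h', hh', hend'⟩, hreach'⟩

lemma shortcut {W : Finset G.E} {e : G.E} {p q : G.V} (hp : G.degIn W p ≠ 1)
    (hq : G.degIn W q ≠ 1) (h : G.reachIn (W.erase e) p q) :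
    G.reachIn ((G.pruneStep W).erase e) p q := by
  rcases shortcut_aux hp h with h' | ⟨h1, _⟩
  · exact h'
  · exact absurd h1 hq

open scoped symmDiff

/-! ### Cycles and symmetric differences -/

lemma cycle_degIn_even {C : Finset G.E} (hC : G.IsCycleSet C) (u : G.V) :
    G.degIn C u % 2 = 0 := by
  by_cases hu : u ∈ G.supp C
  · rw [hC.2 u hu]
  · rw [degIn_eq_zero hu]

lemma degIn_add_symmDiff (C₁ C₂ : Finset G.E) (u : G.V) :
    G.degIn (C₁ ∆ C₂) u + 2 * G.degIn (C₁ ∩ C₂) u = G.degIn C₁ u + G.degIn C₂ u := by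
  simp only [Multigraph.degIn]
  rw [← Finset.sum_union_inter]
  have hdisj : Disjoint (C₁ ∆ C₂) (C₁ ∩ C₂) := by
    have := disjoint_symmDiff_inf C₁ C₂
    simpa using this
  have hunion : (C₁ ∆ C₂) ∪ (C₁ ∩ C₂) = C₁ ∪ C₂ := by
    have := symmDiff_sup_inf C₁ C₂
    simpa using this
  rw [← hunion, Finset.sum_union hdisj]
  omega

/-- given an edge of the kernel that is a bridge, the side of `x` contains a
leafless nonempty subgraph -/
lemma side_cycle {e : G.E} (he : e ∈ G.kernelSet) {x y : G.V}
    (hends : G.ends e = s(x, y))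
    (hxy : ¬ G.reachIn (Finset.univ.erase e) x y) :
    ∃ C ⊆ Finset.univ.erase e, C.Nonempty ∧ (∀ u ∈ G.supp C, 2 ≤ G.degIn C u) ∧
      ∃ w ∈ G.supp C, G.reachIn (Finset.univ.erase e) x w := by
  set K := G.kernelSet with hKdef
  set Z := K.erase e with hZdef
  have hxyne : x ≠ y := fun h => hxy (h ▸ reach_refl _ _)
  have hZY : Z ⊆ Finset.univ.erase e := fun g hg =>
    Finset.mem_erase.mpr ⟨(Finset.mem_erase.mp hg).1, Finset.mem_univ g⟩
  have hZK : Z ⊆ K := Finset.erase_subset e K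
  have hxe : x ∈ G.ends e := by rw [hends]; simp
  have hxK : x ∈ G.supp K := mem_supp_iff.mpr ⟨e, he, hxe⟩
  have hdegxK : 2 ≤ G.degIn K x := kernelSet_min_degree x hxK
  have hwt : (if G.ends e = s(x, x) then 2 else if x ∈ G.ends e then 1 else 0) = 1 := by
    have hne : G.ends e ≠ s(x, x) := by
      rw [hends]
      intro hc
      rcases Sym2.eq_iff.mp hc with ⟨_, h⟩ | ⟨_, h⟩ <;> exact hxyne h.symm
    simp [hne, hxe]
  have hdegxZ : 1 ≤ G.degIn Z x := by
    have h := degIn_erase_add he x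
    rw [hwt, ← hZdef] at h
    omega
  obtain ⟨g₀, hg₀, hxg₀⟩ := mem_supp_iff.mp (mem_supp_of_one_le_degIn hdegxZ)
  set D := G.compEdges Z x with hDdef
  have hg₀D : g₀ ∈ D := mem_compEdges_of_reach hg₀ hxg₀ (reach_refl _ _)
  have hDne : D.Nonempty := ⟨g₀, hg₀D⟩
  have hreachD : ∀ u ∈ G.supp D, G.reachIn Z x u := by
    intro u hu
    obtain ⟨g, hg, hug⟩ := mem_supp_iff.mp hu
    exact reach_of_mem_compEdges hg hug
  have hdegD : ∀ u ∈ G.supp D, G.degIn D u = G.degIn Z u := by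
    intro u hu
    exact degIn_eq_of_closed (compEdges_subset _ _) (fun h hh huh =>
      mem_compEdges_of_reach hh huh (hreachD u hu))
  have hdegD2 : ∀ u ∈ G.supp D, u ≠ x → 2 ≤ G.degIn D u := by
    intro u hu hux
    have huy : u ≠ y := by
      rintro rfl
      exact hxy (reach_mono hZY (hreachD u hu))
    have h1 : u ∉ G.ends e := by
      rw [hends]
      simp only [Sym2.mem_iff]
      push_neg
      exact ⟨hux, huy⟩
    have hwtu : (if G.ends e = s(u, u) then 2 else if u ∈ G.ends e then 1 else 0) = 0 := by
      have h2 : G.ends e ≠ s(u, u) := fun hc => h1 (by rw [hc]; simp)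
      simp [h2, h1]
    have hadd := degIn_erase_add he u
    rw [hwtu, ← hZdef] at hadd
    have huK : u ∈ G.supp K := by
      obtain ⟨g, hg, hug⟩ := mem_supp_iff.mp hu
      exact mem_supp_iff.mpr ⟨g, hZK (compEdges_subset _ _ hg), hug⟩
    have hk := kernelSet_min_degree u huK
    rw [← hKdef] at hk
    rw [hdegD u hu]
    omega
  have hcount : (G.supp D).card ≤ D.card := by
    by_cases hxD : x ∈ G.supp D
    · have hsum := degIn_sum_supp D
      have h1 := Finset.sum_erase_add (G.supp D) (G.degIn D) hxD
      have h2 : 2 * ((G.supp D).erase x).card ≤ ∑ u ∈ (G.supp D).erase x, G.degIn D u := by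
        calc 2 * ((G.supp D).erase x).card = ∑ _u ∈ (G.supp D).erase x, 2 := by
              simp [mul_comm]
        _ ≤ _ := Finset.sum_le_sum (fun u hu =>
              hdegD2 u (Finset.mem_of_mem_erase hu) (Finset.mem_erase.mp hu).1)
      have h3 : 1 ≤ G.degIn D x := by
        rw [hdegD x hxD]
        exact hdegxZ
      have h4 : ((G.supp D).erase x).card = (G.supp D).card - 1 :=
        Finset.card_erase_of_mem hxD
      have h5 : 1 ≤ (G.supp D).card := Finset.card_pos.mpr ⟨x, hxD⟩
      omega
    · exact card_supp_le_of_min_degree_two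
        (fun u hu => hdegD2 u hu (fun h => hxD (h ▸ hu)))
  obtain ⟨C, hCD, hCne, hCdeg⟩ := exists_leafless hcount hDne
  refine ⟨C, fun g hg => hZY (compEdges_subset _ _ (hCD hg)), hCne, hCdeg, ?_⟩
  obtain ⟨g, hg⟩ := hCne
  obtain ⟨⟨a, b⟩, habg⟩ := (G.ends g).exists_rep
  have haend : a ∈ G.ends g := by rw [← habg]; simp
  refine ⟨a, mem_supp_iff.mpr ⟨g, hg, haend⟩, ?_⟩
  exact reach_mono hZY (reach_of_mem_compEdges (hCD hg) haend)

end Multigraph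

open Multigraph in
theorem stmt_13' (A : Multigraph) (hconn : A.GConn)
    (h2 : ∃ C₁ C₂ : Finset A.E, A.IsCycleSet C₁ ∧ A.IsCycleSet C₂ ∧ C₁ ≠ C₂)
    (e : A.E) :
    e ∈ A.kernelSet ↔ ∀ v : A.V, ¬ A.IsTreeCompAt (Finset.univ.erase e) v := by
  classical
  obtain ⟨⟨x, y⟩, hxy⟩ := (A.ends e).exists_rep
  have hends : A.ends e = s(x, y) := hxy.symm
  have hxe : x ∈ A.ends e := by rw [hends]; simp
  have hye : y ∈ A.ends e := by rw [hends]; simp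
  have hclass : ∀ v : A.V, A.reachIn (Finset.univ.erase e) v x ∨
      A.reachIn (Finset.univ.erase e) v y := by
    intro v
    have h := hconn.2 v x
    rcases reach_erase_or_left hends h with h' | h' | h'
    · exact Or.inl h'
    · exact Or.inl h'
    · exact Or.inr h'
  constructor
  · -- kernel edge ⇒ no tree component
    intro he v htree
    simp only [Multigraph.IsTreeCompAt] at htree
    have hL2 := card_compVerts_le (G := A) (Finset.univ.erase e) v
    have hC : ∃ C ⊆ Finset.univ.erase e, C.Nonempty ∧
        (∀ u ∈ A.supp C, 2 ≤ A.degIn C u) ∧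
        ∃ w ∈ A.supp C, A.reachIn (Finset.univ.erase e) v w := by
      by_cases hbr : A.reachIn (Finset.univ.erase e) x y
      · -- e is not a bridge: pick a cycle avoiding e
        obtain ⟨C₁, C₂, h1, h2c, hne12⟩ := h2
        have hcyc : ∃ C : Finset A.E, e ∉ C ∧ C.Nonempty ∧
            (∀ u ∈ A.supp C, 2 ≤ A.degIn C u) := by
          by_cases he1 : e ∈ C₁
          · by_cases he2 : e ∈ C₂
            · refine ⟨C₁ ∆ C₂, ?_, ?_, ?_⟩
              · rw [Finset.mem_symmDiff]
                push_neg
                exact ⟨fun _ => he2, fun _ => he1⟩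
              · exact Finset.symmDiff_nonempty.mpr hne12
              · intro u hu
                obtain ⟨g, hg, hug⟩ := mem_supp_iff.mp hu
                have hpos := one_le_degIn hg hug
                have heven₁ := cycle_degIn_even h1 u
                have heven₂ := cycle_degIn_even h2c u
                have hkey := degIn_add_symmDiff C₁ C₂ u
                omega
            · exact ⟨C₂, he2, h2c.1.1, fun u hu => le_of_eq (h2c.2 u hu).symm⟩
          · exact ⟨C₁, he1, h1.1.1, fun u hu => le_of_eq (h1.2 u hu).symm⟩
        obtain ⟨C, heC, hCne, hCdeg⟩ := hcyc
        have hCY : C ⊆ Finset.univ.erase e := fun g hg =>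
          Finset.mem_erase.mpr ⟨fun h => heC (h ▸ hg), Finset.mem_univ g⟩
        obtain ⟨g, hg⟩ := hCne
        obtain ⟨⟨a, b⟩, habg⟩ := (A.ends g).exists_rep
        have haend : a ∈ A.ends g := by rw [← habg]; simp
        have hvx : A.reachIn (Finset.univ.erase e) v x := by
          rcases hclass v with h' | h'
          · exact h'
          · exact reach_trans h' (reach_symm hbr)
        have hxa : A.reachIn (Finset.univ.erase e) x a :=
          reach_erase_of_reach hends hbr (hconn.2 x a)
        exact ⟨C, hCY, ⟨g, hg⟩, hCdeg,
          a, mem_supp_iff.mpr ⟨g, hg, haend⟩, reach_trans hvx hxa⟩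
      · -- e is a bridge
        rcases hclass v with hv | hv
        · obtain ⟨C, hCY, hCne, hCdeg, w, hw, hxw⟩ := side_cycle he hends hbr
          exact ⟨C, hCY, hCne, hCdeg, w, hw, reach_trans hv hxw⟩
        · have hends' : A.ends e = s(y, x) := by rw [hends]; exact Sym2.eq_swap
          have hbr' : ¬ A.reachIn (Finset.univ.erase e) y x :=
            fun h => hbr (reach_symm h)
          obtain ⟨C, hCY, hCne, hCdeg, w, hw, hyw⟩ := side_cycle he hends' hbr'
          exact ⟨C, hCY, hCne, hCdeg, w, hw, reach_trans hv hyw⟩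
    obtain ⟨C, hCY, hCne, hCdeg, hCw⟩ := hC
    have := card_compVerts_le_of_cycle (G := A) (Finset.univ.erase e) v C hCY hCne hCdeg hCw
    omega
  · -- no tree component ⇒ kernel edge
    intro htree
    have hle : ∀ v, (A.compVerts (Finset.univ.erase e) v).card ≤
        (A.compEdges (Finset.univ.erase e) v).card := by
      intro v
      have h1 := card_compVerts_le (G := A) (Finset.univ.erase e) v
      have h2 := htree v
      simp only [Multigraph.IsTreeCompAt] at h2
      omega
    have hside : ∀ v : A.V, ∃ C, C ⊆ A.compEdges (Finset.univ.erase e) v ∧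
        C.Nonempty ∧ ∀ u ∈ A.supp C, 2 ≤ A.degIn C u := by
      intro v
      have hvc := self_mem_compVerts (G := A) (Finset.univ.erase e) v
      have h1 : 1 ≤ (A.compVerts (Finset.univ.erase e) v).card :=
        Finset.card_pos.mpr ⟨v, hvc⟩
      have hDne : (A.compEdges (Finset.univ.erase e) v).Nonempty :=
        Finset.card_pos.mp (by have := hle v; omega)
      have hcount : (A.supp (A.compEdges (Finset.univ.erase e) v)).card ≤
          (A.compEdges (Finset.univ.erase e) v).card :=
        le_trans (Finset.card_le_card (supp_compEdges_subset _ _)) (hle v)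
      obtain ⟨C, hC1, hC2, hC3⟩ := exists_leafless hcount hDne
      exact ⟨C, hC1, hC2, hC3⟩
    obtain ⟨Cx, hCxD, hCxne, hCxdeg⟩ := hside x
    obtain ⟨Cy, hCyD, hCyne, hCydeg⟩ := hside y
    set P : Finset A.E → Prop := fun W =>
      e ∈ W ∧ Cx ⊆ W ∧ Cy ⊆ W ∧
      (∃ w ∈ A.supp Cx, A.reachIn (W.erase e) x w) ∧
      (∃ w ∈ A.supp Cy, A.reachIn (W.erase e) y w) with hPdef
    have hstart : ∀ (z : A.V) (Cz : Finset A.E),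
        Cz ⊆ A.compEdges (Finset.univ.erase e) z → Cz.Nonempty →
        ∃ w ∈ A.supp Cz, A.reachIn (Finset.univ.erase e) z w := by
      intro z Cz hCzD hCzne
      obtain ⟨g, hg⟩ := hCzne
      obtain ⟨⟨a, b⟩, habg⟩ := (A.ends g).exists_rep
      have haend : a ∈ A.ends g := by rw [← habg]; simp
      exact ⟨a, mem_supp_iff.mpr ⟨g, hg, haend⟩,
        reach_of_mem_compEdges (hCzD hg) haend⟩
    have hP0 : P Finset.univ := by
      refine ⟨Finset.mem_univ e, Finset.subset_univ _, Finset.subset_univ _, ?_, ?_⟩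
      · exact hstart x Cx hCxD hCxne
      · exact hstart y Cy hCyD hCyne
    have hstep : ∀ W, P W → P (A.pruneStep W) := by
      rintro W ⟨heW, hCxW, hCyW, ⟨wx, hwx, hrx⟩, ⟨wy, hwy, hry⟩⟩
      have hdeg_end : ∀ (z : A.V) (Cz : Finset A.E) (wz : A.V), z ∈ A.ends e →
          Cz ⊆ W → (∀ u ∈ A.supp Cz, 2 ≤ A.degIn Cz u) → wz ∈ A.supp Cz →
          A.reachIn (W.erase e) z wz → A.degIn W z ≠ 1 := by
        intro z Cz wz hze hCzW hCzdeg hwz hrz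
        by_cases hzs : z ∈ A.supp Cz
        · have h1 := hCzdeg z hzs
          have h2 := degIn_mono hCzW z
          omega
        · have hwzne : wz ≠ z := fun h => hzs (h ▸ hwz)
          obtain ⟨g, hg, hzg⟩ := exists_edge_at_of_reach hrz hwzne
          have hge : g ≠ e := (Finset.mem_erase.mp hg).1
          have h2 := two_le_degIn_of_two_edges (Finset.mem_of_mem_erase hg) heW hge hzg hze
          omega
      have hdx : A.degIn W x ≠ 1 := hdeg_end x Cx wx hxe hCxW hCxdeg hwx hrx
      have hdy : A.degIn W y ≠ 1 := hdeg_end y Cy wy hye hCyW hCydeg hwy hry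
      have hdwx : A.degIn W wx ≠ 1 := by
        have h1 := hCxdeg wx hwx
        have h2 := degIn_mono hCxW wx
        omega
      have hdwy : A.degIn W wy ≠ 1 := by
        have h1 := hCydeg wy hwy
        have h2 := degIn_mono hCyW wy
        omega
      refine ⟨?_, leafless_subset_pruneStep hCxW hCxdeg,
        leafless_subset_pruneStep hCyW hCydeg, ?_, ?_⟩
      · refine mem_pruneStep_iff.mpr ⟨heW, fun u hu => ?_⟩
        rw [hends] at hu
        rcases Sym2.mem_iff.mp hu with rfl | rfl
        exacts [hdx, hdy]
      · exact ⟨wx, hwx, shortcut hdx hdwx hrx⟩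
      · exact ⟨wy, hwy, shortcut hdy hdwy hry⟩
    have hiter : ∀ n, P (A.pruneStep^[n] Finset.univ) := by
      intro n
      induction n with
      | zero => exact hP0
      | succ n ih =>
        rw [Function.iterate_succ_apply']
        exact hstep _ ih
    exact (hiter (Fintype.card A.E)).1

/-- For a connected graph `A` with at least two cycles, `e ∈ ⌊A⌋` iff every
component of `A \ e` contains a cycle (equivalently, `A \ e` has no tree
component). -/
theorem stmt_13 (A : Multigraph) (hconn : A.GConn)
    (h2 : ∃ C₁ C₂ : Finset A.E, A.IsCycleSet C₁ ∧ A.IsCycleSet C₂ ∧ C₁ ≠ C₂)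
    (e : A.E) :
    e ∈ A.kernelSet ↔ ∀ v : A.V, ¬ A.IsTreeCompAt (Finset.univ.erase e) v := by
  exact stmt_13' A hconn h2 e
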